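/- Suppose σ₁,…,σ_Q : I → ℝ take values in 4πℤ \ {0} and b₁,…,b_Q : I → Ω are functions on an interval I ⊂ ℝ with b_p(t) ≠ b_q(t) for p ≠ q and all t, such that the measure-valued map t ↦ λ(t) = Σ_p σ_p(t) δ_{b_p(t)} is continuous in the weak* topology on (C⁰₀(Ω))*. Then, after relabeling, each b_p is continuous on I and each σ_p is constant on I. -/

import Mathlib

open Set Metric

namespace AtomicProof

/-! ### Quantization helpers -/

lemma quant_abs {x : ℝ} (hx : ∃ k : ℤ, k ≠ 0 ∧ x = 4 * Real.pi * k) : 4 * Real.pi ≤ |x| := by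
  obtain ⟨k, hk, rfl⟩ := hx
  have h1 : (1 : ℤ) ≤ |k| := Int.one_le_abs hk
  have h1' : (1 : ℝ) ≤ |(k : ℝ)| := by rw [← Int.cast_abs]; exact_mod_cast h1
  have hpi := Real.pi_pos
  rw [abs_mul, abs_of_pos (by linarith : (0:ℝ) < 4 * Real.pi)]
  nlinarith

lemma quant_eq {x y : ℝ} (hx : ∃ k : ℤ, k ≠ 0 ∧ x = 4 * Real.pi * k)
    (hy : ∃ k : ℤ, k ≠ 0 ∧ y = 4 * Real.pi * k) (h : |x - y| < Real.pi) : x = y := by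
  obtain ⟨k, -, rfl⟩ := hx
  obtain ⟨m, -, rfl⟩ := hy
  by_contra hne
  have hkm : k ≠ m := fun he => hne (by rw [he])
  have h1 : (1 : ℤ) ≤ |k - m| := Int.one_le_abs (sub_ne_zero.2 hkm)
  have h1' : (1 : ℝ) ≤ |(k : ℝ) - (m : ℝ)| := by
    have : ((k : ℝ) - (m : ℝ)) = ((k - m : ℤ) : ℝ) := by push_cast; ring
    rw [this, ← Int.cast_abs]; exact_mod_cast h1
  have hpi := Real.pi_pos
  have he : 4 * Real.pi * (k:ℝ) - 4 * Real.pi * (m:ℝ) = 4 * Real.pi * ((k:ℝ) - (m:ℝ)) := by ring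
  rw [he, abs_mul, abs_of_pos (by linarith : (0:ℝ) < 4 * Real.pi)] at h
  nlinarith

/-! ### Separation helpers -/

lemma gap {Q : ℕ} (hQ : 0 < Q) (x : Fin Q → ℝ × ℝ) (hx : ∀ p q, p ≠ q → x p ≠ x q) :
    ∃ d > 0, ∀ p q, p ≠ q → d ≤ dist (x p) (x q) := by
  haveI : Nonempty (Fin Q) := Fin.pos_iff_nonempty.mp hQ
  classical
  set f : Fin Q × Fin Q → ℝ := fun pq => if pq.1 = pq.2 then 1 else dist (x pq.1) (x pq.2) with hf
  have hne : (Finset.univ : Finset (Fin Q × Fin Q)).Nonempty := Finset.univ_nonempty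
  refine ⟨Finset.univ.inf' hne f, ?_, ?_⟩
  · rw [gt_iff_lt, Finset.lt_inf'_iff]
    intro pq _
    by_cases h : pq.1 = pq.2
    · simp [hf, h]
    · simp only [hf, if_neg h]
      exact dist_pos.2 (hx _ _ h)
  · intro p q hpq
    have h := Finset.inf'_le f (Finset.mem_univ (p, q))
    exact h.trans (le_of_eq (by simp [hf, hpq]))

lemma rad {Ω : Set (ℝ × ℝ)} (hΩ : IsOpen Ω) {Q : ℕ} (hQ : 0 < Q) (x : Fin Q → ℝ × ℝ)
    (hxΩ : ∀ p, x p ∈ Ω) (hx : ∀ p q, p ≠ q → x p ≠ x q) (ε : ℝ) (hε : 0 < ε) :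
    ∃ r, 0 < r ∧ r < ε ∧ (∀ p, closedBall (x p) (2*r) ⊆ Ω) ∧
      ∀ p q, p ≠ q → 4*r < dist (x p) (x q) := by
  haveI : Nonempty (Fin Q) := Fin.pos_iff_nonempty.mp hQ
  have hR : ∀ p, ∃ R, 0 < R ∧ closedBall (x p) R ⊆ Ω := by
    intro p
    obtain ⟨R, hRp, hsub⟩ := Metric.isOpen_iff.mp hΩ (x p) (hxΩ p)
    exact ⟨R/2, by linarith, (closedBall_subset_ball (by linarith)).trans hsub⟩
  choose R hRpos hRsub using hR
  obtain ⟨d, hd, hdle⟩ := gap hQ x hx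
  have hne : (Finset.univ : Finset (Fin Q)).Nonempty := Finset.univ_nonempty
  have hinf : 0 < Finset.univ.inf' hne R := by
    rw [Finset.lt_inf'_iff]; exact fun p _ => hRpos p
  refine ⟨min (ε/2) (min ((Finset.univ.inf' hne R)/2) (d/5)), by positivity, ?_, ?_, ?_⟩
  · have := min_le_left (ε/2) (min ((Finset.univ.inf' hne R)/2) (d/5)); linarith
  · intro p
    refine (closedBall_subset_closedBall ?_).trans (hRsub p)
    have h1 : min (ε/2) (min ((Finset.univ.inf' hne R)/2) (d/5)) ≤ (Finset.univ.inf' hne R)/2 :=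
      (min_le_right _ _).trans (min_le_left _ _)
    have h2 : Finset.univ.inf' hne R ≤ R p := Finset.inf'_le _ (Finset.mem_univ p)
    linarith
  · intro p q h
    have h1 : min (ε/2) (min ((Finset.univ.inf' hne R)/2) (d/5)) ≤ d/5 :=
      (min_le_right _ _).trans (min_le_right _ _)
    have := hdle p q h
    linarith

/-! ### Bump functions -/

noncomputable def bump (c : ℝ × ℝ) (R₀ R₁ : ℝ) (x : ℝ × ℝ) : ℝ :=
  min 1 (max 0 ((R₁ - dist x c) / (R₁ - R₀)))

lemma bump_continuous (c : ℝ × ℝ) (R₀ R₁ : ℝ) : Continuous (bump c R₀ R₁) :=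
  continuous_const.min (continuous_const.max
    ((continuous_const.sub (continuous_id.dist continuous_const)).div_const _))

lemma bump_eq_one {c x : ℝ × ℝ} {R₀ R₁ : ℝ} (h : R₀ < R₁) (hx : dist x c ≤ R₀) :
    bump c R₀ R₁ x = 1 := by
  unfold bump
  rw [min_eq_left]
  refine le_max_of_le_right ?_
  rw [le_div_iff₀ (by linarith)]
  linarith

lemma bump_eq_zero {c x : ℝ × ℝ} {R₀ R₁ : ℝ} (h : R₀ < R₁) (hx : R₁ ≤ dist x c) :
    bump c R₀ R₁ x = 0 := by
  unfold bump
  rw [max_eq_left (div_nonpos_iff.mpr (Or.inr ⟨by linarith, by linarith⟩)), min_eq_right zero_le_one]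

lemma bump_tsupport {c : ℝ × ℝ} {R₀ R₁ : ℝ} (h : R₀ < R₁) :
    tsupport (bump c R₀ R₁) ⊆ closedBall c R₁ := by
  refine subset_trans (closure_mono ?_) closure_ball_subset_closedBall
  intro x hx
  by_contra h'
  exact hx (bump_eq_zero h (not_lt.mp (fun hh => h' (mem_ball.mpr hh))))

lemma bump_hcs {c : ℝ × ℝ} {R₀ R₁ : ℝ} (h : R₀ < R₁) : HasCompactSupport (bump c R₀ R₁) :=
  (isCompact_closedBall c R₁).of_isClosed_subset isClosed_closure (bump_tsupport h)


lemma key {Ω : Set (ℝ × ℝ)} {I : Set ℝ} {Q : ℕ} {σ : Fin Q → ℝ → ℝ} {b : Fin Q → ℝ → ℝ × ℝ}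
    (hσ : ∀ p, ∀ t ∈ I, ∃ k : ℤ, k ≠ 0 ∧ σ p t = 4 * Real.pi * k)
    (hcont : ∀ φ : ℝ × ℝ → ℝ, Continuous φ → HasCompactSupport φ → tsupport φ ⊆ Ω →
      ContinuousOn (fun t => ∑ p : Fin Q, σ p t * φ (b p t)) I)
    {t0 : ℝ} (ht0 : t0 ∈ I) {r : ℝ} (hr : 0 < r)
    (hball : ∀ p, closedBall (b p t0) (2*r) ⊆ Ω)
    (hsep : ∀ p q, p ≠ q → 4*r < dist (b p t0) (b q t0)) :
    ∃ δ > 0, ∀ s ∈ I, |s - t0| < δ →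
      ∃ a : Fin Q → Fin Q,
        (∀ p, dist (b (a p) s) (b p t0) ≤ 3*r/2 ∧ σ (a p) s = σ p t0) ∧
        ∀ p q, dist (b q s) (b p t0) ≤ 2*r → q = a p := by
  classical
  have hr32 : r < 3*r/2 := by linarith
  have hr2 : 3*r/2 < 2*r := by linarith
  set φ : Fin Q → (ℝ × ℝ) → ℝ := fun p => bump (b p t0) r (3*r/2) with hφdef
  set ψ : Fin Q → (ℝ × ℝ) → ℝ := fun p => bump (b p t0) (3*r/2) (2*r) with hψdef
  set F : Fin Q → ℝ → ℝ := fun p s => ∑ q : Fin Q, σ q s * φ p (b q s) with hFdef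
  set G : Fin Q → ℝ → ℝ := fun p s => ∑ q : Fin Q, σ q s * ψ p (b q s) with hGdef
  have hFc : ∀ p, ContinuousOn (F p) I := fun p => hcont _ (bump_continuous _ _ _)
      (bump_hcs hr32)
      ((bump_tsupport hr32).trans ((closedBall_subset_closedBall (by linarith)).trans (hball p)))
  have hGc : ∀ p, ContinuousOn (G p) I := fun p => hcont _ (bump_continuous _ _ _)
      (bump_hcs hr2) ((bump_tsupport hr2).trans (hball p))
  have hsep' : ∀ p q : Fin Q, q ≠ p → (2:ℝ)*r ≤ dist (b q t0) (b p t0) := by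
    intro p q hq
    have := hsep p q (Ne.symm hq)
    rw [dist_comm]
    linarith
  have hFt0 : ∀ p, F p t0 = σ p t0 := by
    intro p
    show (∑ q : Fin Q, σ q t0 * φ p (b q t0)) = σ p t0
    rw [Finset.sum_eq_single p]
    · simp only [hφdef]
      rw [bump_eq_one hr32 (by simp [hr.le])]
      exact mul_one _
    · intro q _ hq
      simp only [hφdef]
      rw [bump_eq_zero hr32 (le_trans (by linarith) (hsep' p q hq))]
      exact mul_zero _
    · exact fun h => absurd (Finset.mem_univ p) h
  have hGt0 : ∀ p, G p t0 = σ p t0 := by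
    intro p
    show (∑ q : Fin Q, σ q t0 * ψ p (b q t0)) = σ p t0
    rw [Finset.sum_eq_single p]
    · simp only [hψdef]
      rw [bump_eq_one hr2 (by simp; linarith)]
      exact mul_one _
    · intro q _ hq
      simp only [hψdef]
      rw [bump_eq_zero hr2 (hsep' p q hq)]
      exact mul_zero _
    · exact fun h => absurd (Finset.mem_univ p) h
  have hev : ∀ᶠ s in nhdsWithin t0 I,
      ∀ p : Fin Q, |F p s - σ p t0| < Real.pi ∧ |G p s - σ p t0| < Real.pi := by
    rw [Filter.eventually_all]
    intro p
    have h1 : Filter.Tendsto (F p) (nhdsWithin t0 I) (nhds (F p t0)) := (hFc p) t0 ht0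
    have h2 : Filter.Tendsto (G p) (nhdsWithin t0 I) (nhds (G p t0)) := (hGc p) t0 ht0
    rw [hFt0 p] at h1
    rw [hGt0 p] at h2
    have e1 := h1 (Metric.ball_mem_nhds _ Real.pi_pos)
    have e2 := h2 (Metric.ball_mem_nhds _ Real.pi_pos)
    filter_upwards [e1, e2] with s hs1 hs2
    rw [Set.mem_preimage, mem_ball, Real.dist_eq] at hs1 hs2
    exact ⟨hs1, hs2⟩
  obtain ⟨δ, hδ, hδsub⟩ := Metric.mem_nhdsWithin_iff.mp hev
  refine ⟨δ, hδ, ?_⟩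
  intro s hsI hs
  have hFG : ∀ p : Fin Q, |F p s - σ p t0| < Real.pi ∧ |G p s - σ p t0| < Real.pi :=
    hδsub ⟨mem_ball.mpr (by rw [Real.dist_eq]; exact hs), hsI⟩
  have hpi := Real.pi_pos
  have hex : ∀ p, ∃ q, dist (b q s) (b p t0) < 2*r := by
    intro p
    by_contra hno
    push_neg at hno
    have hz : G p s = 0 := by
      show (∑ q : Fin Q, σ q s * ψ p (b q s)) = 0
      refine Finset.sum_eq_zero fun q _ => ?_
      simp only [hψdef]
      rw [bump_eq_zero hr2 (hno q)]
      exact mul_zero _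
    have h4 := quant_abs (hσ p t0 ht0)
    have h5 := (hFG p).2
    rw [hz, abs_sub_comm, sub_zero] at h5
    linarith
  choose a ha using hex
  have hinj : Function.Injective a := by
    intro p p' hpp
    by_contra hne
    have h1 := ha p
    have h2 := ha p'
    rw [hpp] at h1
    have h3 := hsep p p' hne
    have htr : dist (b p t0) (b p' t0) ≤ dist (b (a p') s) (b p t0) + dist (b (a p') s) (b p' t0) := by
      rw [dist_comm (b (a p') s) (b p t0)]
      exact dist_triangle _ _ _
    linarith
  have hsurj := (Finite.injective_iff_bijective.mp hinj).2
  have huni : ∀ p q, dist (b q s) (b p t0) ≤ 2*r → q = a p := by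
    intro p q hq
    obtain ⟨p', rfl⟩ := hsurj q
    by_cases hpe : p' = p
    · rw [hpe]
    · exfalso
      have h2 := ha p'
      have h3 := hsep p p' (fun h => hpe h.symm)
      have htr : dist (b p t0) (b p' t0) ≤
          dist (b (a p') s) (b p t0) + dist (b (a p') s) (b p' t0) := by
        rw [dist_comm (b (a p') s) (b p t0)]
        exact dist_triangle _ _ _
      linarith
  have hother : ∀ p q, q ≠ a p → 2*r ≤ dist (b q s) (b p t0) := by
    intro p q hq
    by_contra hlt
    push_neg at hlt
    exact hq (huni p q hlt.le)
  refine ⟨a, fun p => ?_, huni⟩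
  have hFs : F p s = σ (a p) s * φ p (b (a p) s) := by
    show (∑ q : Fin Q, σ q s * φ p (b q s)) = _
    rw [Finset.sum_eq_single (a p)]
    · intro q _ hq
      simp only [hφdef]
      rw [bump_eq_zero hr32 (le_trans (by linarith) (hother p q hq))]
      exact mul_zero _
    · exact fun h => absurd (Finset.mem_univ _) h
  have hGs : G p s = σ (a p) s * ψ p (b (a p) s) := by
    show (∑ q : Fin Q, σ q s * ψ p (b q s)) = _
    rw [Finset.sum_eq_single (a p)]
    · intro q _ hq
      simp only [hψdef]
      rw [bump_eq_zero hr2 (hother p q hq)]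
      exact mul_zero _
    · exact fun h => absurd (Finset.mem_univ _) h
  by_cases hclose : dist (b (a p) s) (b p t0) ≤ 3*r/2
  · have hone : ψ p (b (a p) s) = 1 := by simp only [hψdef]; exact bump_eq_one hr2 hclose
    have hm : σ (a p) s = σ p t0 := by
      apply quant_eq (hσ _ s hsI) (hσ p t0 ht0)
      have h5 := (hFG p).2
      rwa [hGs, hone, mul_one] at h5
    exact ⟨hclose, hm⟩
  · exfalso
    push_neg at hclose
    have hzero : φ p (b (a p) s) = 0 := by simp only [hφdef]; exact bump_eq_zero hr32 hclose.le
    have h5 := (hFG p).1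
    rw [hFs, hzero, mul_zero, abs_sub_comm, sub_zero] at h5
    have h6 := quant_abs (hσ p t0 ht0)
    linarith


/-! ### Order interval helpers -/

lemma split_helper {a t₁ t₂ : ℝ} (h : t₁ ∈ uIcc a t₂) :
    uIcc a t₂ = uIcc a t₁ ∪ uIcc t₁ t₂ := by
  refine subset_antisymm uIcc_subset_uIcc_union_uIcc ?_
  refine union_subset (uIcc_subset_uIcc left_mem_uIcc h) (uIcc_subset_uIcc h right_mem_uIcc)

lemma ov_helper {a t₁ t₂ : ℝ} (h : t₁ ∈ uIcc a t₂) :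
    uIcc a t₁ ∩ uIcc t₁ t₂ ⊆ {t₁} := by
  rintro x ⟨hx1, hx2⟩
  rw [Set.mem_uIcc] at hx1 hx2 h
  simp only [Set.mem_singleton_iff]
  rcases h with ⟨h1, h2⟩ | ⟨h1, h2⟩ <;> rcases hx1 with ⟨a1, a2⟩ | ⟨a1, a2⟩ <;>
    rcases hx2 with ⟨b1, b2⟩ | ⟨b1, b2⟩ <;> linarith

lemma loc_helper {a t₁ t₂ : ℝ} (h : t₁ ∈ uIcc a t₂) :
    ∀ s₀ ∈ uIcc a t₁, s₀ ≠ t₁ →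
      ∃ ρ > 0, ∀ x ∈ uIcc a t₂, |x - s₀| < ρ → x ∈ uIcc a t₁ := by
  intro s₀ hs₀ hne
  refine ⟨|t₁ - s₀|, abs_pos.2 (sub_ne_zero.2 (fun he => hne he.symm)), ?_⟩
  intro x hx hxd
  rw [Set.mem_uIcc] at h hs₀ hx ⊢
  rcases abs_lt.mp hxd with ⟨hd1, hd2⟩
  rcases abs_cases (t₁ - s₀) with ⟨he, -⟩ | ⟨he, -⟩ <;> rw [he] at hd1 hd2 <;>
    rcases h with ⟨h1, h2⟩ | ⟨h1, h2⟩ <;> rcases hs₀ with ⟨a1, a2⟩ | ⟨a1, a2⟩ <;>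
    rcases hx with ⟨b1, b2⟩ | ⟨b1, b2⟩ <;>
    first
      | (left; constructor <;> linarith)
      | (right; constructor <;> linarith)

lemma abs_le_of_uIcc {a c s : ℝ} (h : s ∈ uIcc a c) : |s - a| ≤ |c - a| := by
  rw [Set.mem_uIcc] at h
  rcases abs_cases (s - a) with ⟨h1, h1'⟩ | ⟨h1, h1'⟩ <;> rw [h1] <;>
    rcases abs_cases (c - a) with ⟨h2, h2'⟩ | ⟨h2, h2'⟩ <;> rw [h2] <;>
    rcases h with ⟨e1, e2⟩ | ⟨e1, e2⟩ <;> linarith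

lemma abs_le_of_uIcc' {a c s : ℝ} (h : s ∈ uIcc a c) : |s - c| ≤ |a - c| :=
  abs_le_of_uIcc (by rwa [Set.uIcc_comm])

lemma mid_helper {a t₁ t₂ : ℝ} (h1 : t₂ ∉ uIcc a t₁) (h2 : t₁ ∉ uIcc a t₂) :
    a ∈ uIcc t₁ t₂ := by
  rw [Set.mem_uIcc]
  rcases le_total t₁ t₂ with hc | hc
  · left
    constructor
    · by_contra hlt; push_neg at hlt
      exact h2 (Set.mem_uIcc.mpr (Or.inl ⟨hlt.le, hc⟩))
    · by_contra hlt; push_neg at hlt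
      exact h1 (Set.mem_uIcc.mpr (Or.inr ⟨hc, hlt.le⟩))
  · right
    constructor
    · by_contra hlt; push_neg at hlt
      exact h1 (Set.mem_uIcc.mpr (Or.inl ⟨hlt.le, hc⟩))
    · by_contra hlt; push_neg at hlt
      exact h2 (Set.mem_uIcc.mpr (Or.inr ⟨hc, hlt.le⟩))

/-! ### Topology helpers -/

lemma cwa_of_near_eq {α : Type*} [PseudoMetricSpace α] {f : ℝ → α} {S : Set ℝ} {x : ℝ}
    (hη : ∃ η > 0, ∀ y ∈ S, |y - x| < η → y = x) : ContinuousWithinAt f S x := by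
  obtain ⟨η, hη0, hy⟩ := hη
  rw [Metric.continuousWithinAt_iff]
  intro ε hε
  refine ⟨η, hη0, fun y hyS hyd => ?_⟩
  rw [hy y hyS (by rwa [Real.dist_eq] at hyd)]
  simpa using hε

lemma cont_on_subsingleton {α : Type*} [PseudoMetricSpace α] {f : ℝ → α} {S : Set ℝ}
    (h : ∀ x ∈ S, ∀ y ∈ S, x = y) : ContinuousOn f S := by
  intro x hx
  exact cwa_of_near_eq ⟨1, one_pos, fun y hy _ => h y hy x hx⟩

lemma clopen_principle {J E : Set ℝ} (hJ : IsPreconnected J) {t₀ : ℝ}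
    (h₀J : t₀ ∈ J) (h₀E : t₀ ∈ E)
    (hopen : ∀ t ∈ J, t ∈ E → ∃ ρ > 0, ∀ s ∈ J, |s - t| < ρ → s ∈ E)
    (hclosed : ∀ t ∈ J, (∀ ρ > 0, ∃ s ∈ J, s ∈ E ∧ |s - t| < ρ) → t ∈ E) :
    ∀ t ∈ J, t ∈ E := by
  haveI : PreconnectedSpace J := Subtype.preconnectedSpace hJ
  set E' : Set J := {x : J | (x : ℝ) ∈ E} with hE'
  have hop : IsOpen E' := by
    rw [Metric.isOpen_iff]
    rintro ⟨x, hxJ⟩ hx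
    obtain ⟨ρ, hρ, hb⟩ := hopen x hxJ hx
    refine ⟨ρ, hρ, ?_⟩
    rintro ⟨y, hyJ⟩ hy
    rw [mem_ball, Subtype.dist_eq, Real.dist_eq] at hy
    exact hb y hyJ hy
  have hcl : IsClosed E' := by
    rw [← isOpen_compl_iff, Metric.isOpen_iff]
    rintro ⟨x, hxJ⟩ hx
    by_contra hcon
    push_neg at hcon
    refine hx (hclosed x hxJ ?_)
    intro ρ hρ
    obtain ⟨y, hy1, hy2⟩ := not_subset.mp (hcon ρ hρ)
    refine ⟨(y : ℝ), y.2, not_not.mp hy2, ?_⟩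
    rw [mem_ball, Subtype.dist_eq, Real.dist_eq] at hy1
    exact hy1
  have huniv : E' = univ := by
    rcases isClopen_iff.mp ⟨hcl, hop⟩ with he | hu
    · exfalso
      have : (⟨t₀, h₀J⟩ : J) ∈ E' := h₀E
      rw [he] at this
      exact this
    · exact hu
  intro t ht
  have : (⟨t, ht⟩ : J) ∈ E' := by rw [huniv]; trivial
  exact this


def Pgood (I : Set ℝ) {Q : ℕ} (σ : Fin Q → ℝ → ℝ) (b : Fin Q → ℝ → ℝ × ℝ) (ts t : ℝ) : Prop :=
  ∃ f : ℝ → Equiv.Perm (Fin Q), f ts = 1 ∧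
    (∀ s ∈ I ∩ uIcc ts t, ∀ p, σ (f s p) s = σ p ts) ∧
    (∀ p, ContinuousOn (fun s => b (f s p) s) (I ∩ uIcc ts t))

lemma pgood_mono {I : Set ℝ} {Q : ℕ} {σ : Fin Q → ℝ → ℝ} {b : Fin Q → ℝ → ℝ × ℝ} {ts t₁ t₂ : ℝ}
    (h : Pgood I σ b ts t₁) (hm : t₂ ∈ uIcc ts t₁) : Pgood I σ b ts t₂ := by
  obtain ⟨f, h1, h2, h3⟩ := h
  have hsub : uIcc ts t₂ ⊆ uIcc ts t₁ := uIcc_subset_uIcc left_mem_uIcc hm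
  exact ⟨f, h1, fun s hs => h2 s ⟨hs.1, hsub hs.2⟩,
    fun p => (h3 p).mono (inter_subset_inter_right _ hsub)⟩

lemma isClosed_uIcc' {a b : ℝ} : IsClosed (uIcc a b) := by
  rw [Set.uIcc]; exact isClosed_Icc

lemma ext_lemma {Ω : Set (ℝ × ℝ)} {I : Set ℝ} {Q : ℕ} {σ : Fin Q → ℝ → ℝ} {b : Fin Q → ℝ → ℝ × ℝ}
    (hΩ : IsOpen Ω) (hbΩ : ∀ p, ∀ t ∈ I, b p t ∈ Ω)
    (hbdist : ∀ t ∈ I, ∀ p q : Fin Q, p ≠ q → b p t ≠ b q t)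
    (hσ : ∀ p, ∀ t ∈ I, ∃ k : ℤ, k ≠ 0 ∧ σ p t = 4 * Real.pi * k)
    (hcont : ∀ φ : ℝ × ℝ → ℝ, Continuous φ → HasCompactSupport φ → tsupport φ ⊆ Ω →
      ContinuousOn (fun t => ∑ p : Fin Q, σ p t * φ (b p t)) I)
    (hQ : 0 < Q)
    {ts t₁ t₂ tb : ℝ} (ht₁I : t₁ ∈ I) (htbI : tb ∈ I)
    (hP1 : Pgood I σ b ts t₁)
    {r δ : ℝ} (hr : 0 < r) (hδ : 0 < δ)
    (hsep : ∀ p q, p ≠ q → 4*r < dist (b p tb) (b q tb))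
    (hkey : ∀ s ∈ I, |s - tb| < δ →
      ∃ a : Fin Q → Fin Q,
        (∀ p, dist (b (a p) s) (b p tb) ≤ 3*r/2 ∧ σ (a p) s = σ p tb) ∧
        ∀ p q, dist (b q s) (b p tb) ≤ 2*r → q = a p)
    (hsplit : uIcc ts t₂ = uIcc ts t₁ ∪ uIcc t₁ t₂)
    (hov : uIcc ts t₁ ∩ uIcc t₁ t₂ ⊆ {t₁})
    (hsubball : ∀ s ∈ uIcc t₁ t₂, |s - tb| < δ) :
    Pgood I σ b ts t₂ := by
  classical
  obtain ⟨f, hf1, hfm, hfc⟩ := hP1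
  have hkey' : ∀ s : ℝ, ∃ a : Fin Q → Fin Q, s ∈ I ∩ uIcc t₁ t₂ →
      ((∀ p, dist (b (a p) s) (b p tb) ≤ 3*r/2 ∧ σ (a p) s = σ p tb) ∧
       ∀ p q, dist (b q s) (b p tb) ≤ 2*r → q = a p) := by
    intro s
    by_cases hs : s ∈ I ∩ uIcc t₁ t₂
    · obtain ⟨a, ha⟩ := hkey s hs.1 (hsubball s hs.2)
      exact ⟨a, fun _ => ha⟩
    · exact ⟨id, fun h => absurd h hs⟩
  choose a ha using hkey'
  have habij : ∀ s, s ∈ I ∩ uIcc t₁ t₂ → Function.Bijective (a s) := by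
    intro s hs
    refine Finite.injective_iff_bijective.mp ?_
    intro p p' hpp
    by_contra hne
    have h1 := ((ha s hs).1 p).1
    have h2 := ((ha s hs).1 p').1
    rw [hpp] at h1
    have h3 := hsep p p' hne
    have htr : dist (b p tb) (b p' tb) ≤
        dist (b (a s p') s) (b p tb) + dist (b (a s p') s) (b p' tb) := by
      rw [dist_comm (b (a s p') s) (b p tb)]; exact dist_triangle _ _ _
    linarith
  set A : ℝ → Equiv.Perm (Fin Q) :=
    fun s => if hs : s ∈ I ∩ uIcc t₁ t₂ then Equiv.ofBijective (a s) (habij s hs) else 1 with hA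
  have hAapp : ∀ s, s ∈ I ∩ uIcc t₁ t₂ → ∀ q, A s q = a s q := by
    intro s hs q
    simp only [hA, dif_pos hs, Equiv.ofBijective_apply]
  have ht₁m : t₁ ∈ I ∩ uIcc t₁ t₂ := ⟨ht₁I, left_mem_uIcc⟩
  set q0 : Fin Q → Fin Q := fun p => (A t₁).symm (f t₁ p) with hq0
  have hat₁ : ∀ p, a t₁ (q0 p) = f t₁ p := by
    intro p
    rw [← hAapp t₁ ht₁m]
    exact (A t₁).apply_symm_apply _
  set g : ℝ → Equiv.Perm (Fin Q) :=
    fun s => if s ∈ uIcc ts t₁ then f s else (f t₁).trans ((A t₁).symm.trans (A s)) with hg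
  have hgf : ∀ s ∈ uIcc ts t₁, g s = f s := by
    intro s hs
    simp only [hg, if_pos hs]
  have hgform : ∀ s, s ∈ I ∩ uIcc t₁ t₂ → ∀ p, b (g s p) s = b (a s (q0 p)) s := by
    intro s hs p
    by_cases h1 : s ∈ uIcc ts t₁
    · have hst : s = t₁ := Set.mem_singleton_iff.mp (hov ⟨h1, hs.2⟩)
      subst hst
      rw [hgf s h1, hat₁]
    · simp only [hg, if_neg h1, Equiv.trans_apply]
      rw [hAapp s hs]
  have hmass : ∀ s ∈ I ∩ uIcc ts t₂, ∀ p, σ (g s p) s = σ p ts := by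
    intro s hs p
    have hs2 : s ∈ uIcc ts t₁ ∪ uIcc t₁ t₂ := hsplit ▸ hs.2
    by_cases h1 : s ∈ uIcc ts t₁
    · rw [hgf s h1]; exact hfm s ⟨hs.1, h1⟩ p
    · have hsR : s ∈ I ∩ uIcc t₁ t₂ := ⟨hs.1, hs2.resolve_left h1⟩
      have e1 : g s p = a s (q0 p) := by
        simp only [hg, if_neg h1, Equiv.trans_apply]
        exact hAapp s hsR _
      rw [e1]
      have e2 := ((ha s hsR).1 (q0 p)).2
      have e3 := ((ha t₁ ht₁m).1 (q0 p)).2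
      rw [hat₁] at e3
      have e4 := hfm t₁ ⟨ht₁I, right_mem_uIcc⟩ p
      rw [e2, ← e3, e4]
  have hcont' : ∀ p, ContinuousOn (fun s => b (g s p) s) (I ∩ uIcc ts t₂) := by
    intro p
    have hinner : ∀ s₀ ∈ I ∩ uIcc t₁ t₂,
        ContinuousWithinAt (fun s => b (g s p) s) (I ∩ uIcc t₁ t₂) s₀ := by
      intro s₀ hs₀
      rw [Metric.continuousWithinAt_iff]
      intro ε hε
      obtain ⟨r₀, hr₀, hr₀lt, hball₀, hsep₀⟩ :=
        rad hΩ hQ (fun q => b q s₀) (fun q => hbΩ q s₀ hs₀.1)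
          (fun q q' h => hbdist s₀ hs₀.1 q q' h) (min (ε/2) (r/4)) (by positivity)
      obtain ⟨δ₀, hδ₀, hkey₀⟩ := key hσ hcont hs₀.1 hr₀ hball₀ hsep₀
      refine ⟨δ₀, hδ₀, fun y hy hyd => ?_⟩
      obtain ⟨a', ha'⟩ := hkey₀ y hy.1 (by rwa [Real.dist_eq] at hyd)
      have hw := ((ha s₀ hs₀).1 (q0 p)).1
      have h1 := (ha'.1 (a s₀ (q0 p))).1
      have hr₀r : r₀ < r/4 := lt_of_lt_of_le hr₀lt (min_le_right _ _)
      have hid : a' (a s₀ (q0 p)) = a y (q0 p) := by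
        apply (ha y hy).2 (q0 p)
        calc dist (b (a' (a s₀ (q0 p))) y) (b (q0 p) tb)
            ≤ dist (b (a' (a s₀ (q0 p))) y) (b (a s₀ (q0 p)) s₀) +
              dist (b (a s₀ (q0 p)) s₀) (b (q0 p) tb) := dist_triangle _ _ _
          _ ≤ 2*r := by linarith
      show dist (b (g y p) y) (b (g s₀ p) s₀) < ε
      rw [hgform y hy p, hgform s₀ hs₀ p, ← hid]
      calc dist (b (a' (a s₀ (q0 p))) y) (b (a s₀ (q0 p)) s₀) ≤ 3*r₀/2 := h1
        _ < ε := by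
            have : r₀ < ε/2 := lt_of_lt_of_le hr₀lt (min_le_left _ _)
            linarith
    intro s₀ hs₀
    have hsplit' : I ∩ uIcc ts t₂ = (I ∩ uIcc ts t₁) ∪ (I ∩ uIcc t₁ t₂) := by
      rw [hsplit, inter_union_distrib_left]
    rw [hsplit']
    apply ContinuousWithinAt.union
    · by_cases hmem : s₀ ∈ uIcc ts t₁
      · exact (hfc p s₀ ⟨hs₀.1, hmem⟩).congr (fun y hy => by rw [hgf y hy.2])
          (by rw [hgf s₀ hmem])
      · obtain ⟨ρ, hρ, hb'⟩ := Metric.isOpen_iff.mp isClosed_uIcc'.isOpen_compl s₀ hmem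
        exact cwa_of_near_eq ⟨ρ, hρ, fun y hy hyd =>
          absurd hy.2 (hb' (mem_ball.mpr (by rwa [Real.dist_eq])))⟩
    · by_cases hmem : s₀ ∈ uIcc t₁ t₂
      · exact hinner s₀ ⟨hs₀.1, hmem⟩
      · obtain ⟨ρ, hρ, hb'⟩ := Metric.isOpen_iff.mp isClosed_uIcc'.isOpen_compl s₀ hmem
        exact cwa_of_near_eq ⟨ρ, hρ, fun y hy hyd =>
          absurd hy.2 (hb' (mem_ball.mpr (by rwa [Real.dist_eq])))⟩
  refine ⟨g, ?_, hmass, hcont'⟩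
  rw [hgf ts left_mem_uIcc]
  exact hf1


lemma unique_labeling {I : Set ℝ} (hI : I.OrdConnected) {Q : ℕ} (hQ : 0 < Q)
    {b : Fin Q → ℝ → ℝ × ℝ}
    (hbdist : ∀ t ∈ I, ∀ p q : Fin Q, p ≠ q → b p t ≠ b q t)
    {ts t₂ : ℝ} (hts : ts ∈ I) (f g : ℝ → Equiv.Perm (Fin Q))
    (hfg : f ts = g ts)
    (hfc : ∀ p, ContinuousOn (fun s => b (f s p) s) (I ∩ uIcc ts t₂))
    (hgc : ∀ p, ContinuousOn (fun s => b (g s p) s) (I ∩ uIcc ts t₂)) :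
    ∀ s ∈ I ∩ uIcc ts t₂, f s = g s := by
  classical
  haveI : Nonempty (Fin Q) := Fin.pos_iff_nonempty.mp hQ
  have hne : (Finset.univ : Finset (Fin Q)).Nonempty := Finset.univ_nonempty
  set J := I ∩ uIcc ts t₂ with hJ
  have hJpc : IsPreconnected J := (hI.inter Set.ordConnected_uIcc).isPreconnected
  have h0 : ts ∈ J := ⟨hts, left_mem_uIcc⟩
  have hchoice : ∀ t ∈ J, ∀ d : ℝ, 0 < d → ∀ p : Fin Q, ∃ ρ > 0, ∀ s ∈ J, |s - t| < ρ →
      dist (b (f s p) s) (b (f t p) t) < d/3 ∧ dist (b (g s p) s) (b (g t p) t) < d/3 := by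
    intro t htJ d hd p
    obtain ⟨ρ1, hρ1, h1⟩ := Metric.continuousWithinAt_iff.mp (hfc p t htJ) (d/3) (by linarith)
    obtain ⟨ρ2, hρ2, h2⟩ := Metric.continuousWithinAt_iff.mp (hgc p t htJ) (d/3) (by linarith)
    refine ⟨min ρ1 ρ2, lt_min hρ1 hρ2, fun s hs hlt => ⟨?_, ?_⟩⟩
    · exact h1 hs (by rw [Real.dist_eq]; exact hlt.trans_le (min_le_left _ _))
    · exact h2 hs (by rw [Real.dist_eq]; exact hlt.trans_le (min_le_right _ _))
  refine clopen_principle (E := {s | f s = g s}) hJpc h0 hfg ?_ ?_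
  · intro t htJ htE
    obtain ⟨d, hd, hsep⟩ := gap hQ (fun q => b q t) (fun p q h => hbdist t htJ.1 p q h)
    choose ρ hρpos hρ using hchoice t htJ d hd
    refine ⟨Finset.univ.inf' hne ρ,
      by rw [gt_iff_lt, Finset.lt_inf'_iff]; exact fun p _ => hρpos p, ?_⟩
    intro s hs hlt
    have hall : ∀ p : Fin Q, dist (b (f s p) s) (b (f t p) t) < d/3 ∧
        dist (b (g s p) s) (b (g t p) t) < d/3 := fun p =>
      hρ p s hs (lt_of_lt_of_le hlt (Finset.inf'_le _ (Finset.mem_univ p)))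
    show f s = g s
    apply Equiv.ext
    intro p
    set q := (f s).symm (g s p) with hqdef
    have e1 : b (f s q) s = b (g s p) s := by rw [hqdef, Equiv.apply_symm_apply]
    have h1 := (hall q).1
    have h2 := (hall p).2
    rw [e1] at h1
    have hEt : f t = g t := htE
    have hgt : b (g t p) t = b (f t p) t := by rw [hEt]
    have h1' : dist (b (f t q) t) (b (g s p) s) < d/3 := by rw [dist_comm]; exact h1
    have h3 : dist (b (f t q) t) (b (f t p) t) < d := by
      calc dist (b (f t q) t) (b (f t p) t) = dist (b (f t q) t) (b (g t p) t) := by rw [hgt]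
        _ ≤ dist (b (f t q) t) (b (g s p) s) + dist (b (g s p) s) (b (g t p) t) :=
            dist_triangle _ _ _
        _ < d := by linarith
    have hqp : f t q = f t p := by
      by_contra hne'
      exact absurd h3 (not_lt.mpr (hsep _ _ hne'))
    have hqp2 : q = p := (f t).injective hqp
    have e2 : g s p = f s q := ((f s).apply_symm_apply (g s p)).symm
    rw [e2, hqp2]
  · intro t htJ happ
    obtain ⟨d, hd, hsep⟩ := gap hQ (fun q => b q t) (fun p q h => hbdist t htJ.1 p q h)
    choose ρ hρpos hρ using hchoice t htJ d hd
    obtain ⟨s, hsJ, hsE, hslt⟩ := happ (Finset.univ.inf' hne ρ)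
      (by rw [gt_iff_lt, Finset.lt_inf'_iff]; exact fun p _ => hρpos p)
    show f t = g t
    apply Equiv.ext
    intro p
    have hall := hρ p s hsJ (lt_of_lt_of_le hslt (Finset.inf'_le _ (Finset.mem_univ p)))
    have h1 := hall.1
    have h2 := hall.2
    have hsE' : f s = g s := hsE
    have hse : b (f s p) s = b (g s p) s := by rw [hsE']
    have h1' : dist (b (f t p) t) (b (g s p) s) < d/3 := by
      rw [← hse, dist_comm]; exact h1
    have h3 : dist (b (f t p) t) (b (g t p) t) < d := by
      calc dist (b (f t p) t) (b (g t p) t)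
          ≤ dist (b (f t p) t) (b (g s p) s) + dist (b (g s p) s) (b (g t p) t) :=
            dist_triangle _ _ _
        _ < d := by linarith
    by_contra hne'
    exact absurd h3 (not_lt.mpr (hsep _ _ hne'))


lemma abs_le_max_of_uIcc {a c s x : ℝ} (h : s ∈ uIcc a c) :
    |s - x| ≤ max |a - x| |c - x| := by
  rw [Set.mem_uIcc] at h
  rcases abs_cases (s - x) with ⟨h1, h1'⟩ | ⟨h1, h1'⟩ <;>
    rcases abs_cases (a - x) with ⟨h2, h2'⟩ | ⟨h2, h2'⟩ <;>
    rcases abs_cases (c - x) with ⟨h3, h3'⟩ | ⟨h3, h3'⟩ <;>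
    rw [h1, h2, h3] <;>
    rcases h with ⟨e1, e2⟩ | ⟨e1, e2⟩ <;>
    first
      | (apply le_max_of_le_left; linarith)
      | (apply le_max_of_le_right; linarith)

end AtomicProof

/-- if `λ(t) = Σ_p σ_p(t) δ_{b_p(t)}` is a weak*-continuous curve of
atomic measures on `Ω` with distinct atoms and masses in `4πℤ \ {0}`, then after
relabeling the trajectories `b_p` are continuous and the weights `σ_p` are constant. -/
theorem atomic_measures_continuous_trajectories
    (Ω : Set (ℝ × ℝ)) (hΩ : IsOpen Ω) (I : Set ℝ) (hI : I.OrdConnected)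
    (Q : ℕ) (σ : Fin Q → ℝ → ℝ) (b : Fin Q → ℝ → ℝ × ℝ)
    (hbΩ : ∀ p, ∀ t ∈ I, b p t ∈ Ω)
    (hbdist : ∀ t ∈ I, ∀ p q : Fin Q, p ≠ q → b p t ≠ b q t)
    (hσ : ∀ p, ∀ t ∈ I, ∃ k : ℤ, k ≠ 0 ∧ σ p t = 4 * Real.pi * k)
    (hcont : ∀ φ : ℝ × ℝ → ℝ, Continuous φ → HasCompactSupport φ → tsupport φ ⊆ Ω →
      ContinuousOn (fun t => ∑ p : Fin Q, σ p t * φ (b p t)) I) :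
    ∃ π : ℝ → Equiv.Perm (Fin Q),
      ∀ p : Fin Q,
        ContinuousOn (fun t => b (π t p) t) I
          ∧ ∃ c : ℝ, ∀ t ∈ I, σ (π t p) t = c := by
  classical
  open Set Metric AtomicProof in
  rcases Nat.eq_zero_or_pos Q with hQ0 | hQ
  · subst hQ0
    exact ⟨fun _ => 1, fun p => p.elim0⟩
  rcases I.eq_empty_or_nonempty with hIe | ⟨ts, hts⟩
  · refine ⟨fun _ => 1, fun p => ⟨?_, 0, ?_⟩⟩
    · rw [hIe]; exact continuousOn_empty _
    · intro t ht; rw [hIe] at ht; exact absurd ht (Set.notMem_empty t)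
  have hPstar : AtomicProof.Pgood I σ b ts ts := by
    refine ⟨fun _ => 1, rfl, ?_, ?_⟩
    · intro s hs p
      have hseq : s = ts := by
        have h2 := hs.2
        rw [Set.uIcc_self] at h2
        exact Set.mem_singleton_iff.mp h2
      rw [hseq]
      simp
    · intro p
      apply AtomicProof.cont_on_subsingleton
      intro x hx y hy
      have hx' := hx.2
      have hy' := hy.2
      rw [Set.uIcc_self] at hx' hy'
      rw [Set.mem_singleton_iff.mp hx', Set.mem_singleton_iff.mp hy']
  have hopen : ∀ t₁ ∈ I, AtomicProof.Pgood I σ b ts t₁ →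
      ∃ ρ > 0, ∀ t₂ ∈ I, |t₂ - t₁| < ρ → AtomicProof.Pgood I σ b ts t₂ := by
    intro t₁ ht₁ hP1
    obtain ⟨r, hr, -, hball, hsep⟩ := AtomicProof.rad hΩ hQ (fun q => b q t₁)
      (fun q => hbΩ q t₁ ht₁) (fun p q h => hbdist t₁ ht₁ p q h) 1 one_pos
    obtain ⟨δ, hδ, hkey⟩ := AtomicProof.key hσ hcont ht₁ hr hball hsep
    refine ⟨δ/2, by linarith, ?_⟩
    intro t₂ ht₂ hlt
    by_cases hmono : t₂ ∈ uIcc ts t₁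
    · exact AtomicProof.pgood_mono hP1 hmono
    by_cases hmid : t₁ ∈ uIcc ts t₂
    · refine AtomicProof.ext_lemma hΩ hbΩ hbdist hσ hcont hQ ht₁ ht₁ hP1 hr hδ hsep hkey
        (AtomicProof.split_helper hmid) (AtomicProof.ov_helper hmid) ?_
      intro s hs
      have h1 : |s - t₁| ≤ |t₂ - t₁| := AtomicProof.abs_le_of_uIcc hs
      linarith
    · have hmidts : ts ∈ uIcc t₁ t₂ := AtomicProof.mid_helper hmono hmid
      refine AtomicProof.ext_lemma hΩ hbΩ hbdist hσ hcont hQ hts ht₁ hPstar hr hδ hsep hkey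
        (AtomicProof.split_helper Set.left_mem_uIcc) (AtomicProof.ov_helper Set.left_mem_uIcc) ?_
      intro s hs
      have h1 := AtomicProof.abs_le_max_of_uIcc (x := t₁) hs
      have h2 : |ts - t₁| ≤ |t₂ - t₁| := AtomicProof.abs_le_of_uIcc hmidts
      refine lt_of_le_of_lt h1 (max_lt (by linarith) (by linarith))
  have hclosed : ∀ tb ∈ I, (∀ ρ > 0, ∃ t₁ ∈ I, AtomicProof.Pgood I σ b ts t₁ ∧ |t₁ - tb| < ρ) →
      AtomicProof.Pgood I σ b ts tb := by
    intro tb htb happ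
    obtain ⟨r, hr, -, hball, hsep⟩ := AtomicProof.rad hΩ hQ (fun q => b q tb)
      (fun q => hbΩ q tb htb) (fun p q h => hbdist tb htb p q h) 1 one_pos
    obtain ⟨δ, hδ, hkey⟩ := AtomicProof.key hσ hcont htb hr hball hsep
    obtain ⟨t₁, ht₁, hP1, hlt⟩ := happ (δ/2) (by linarith)
    by_cases hmono : tb ∈ uIcc ts t₁
    · exact AtomicProof.pgood_mono hP1 hmono
    by_cases hmid : t₁ ∈ uIcc ts tb
    · refine AtomicProof.ext_lemma hΩ hbΩ hbdist hσ hcont hQ ht₁ htb hP1 hr hδ hsep hkey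
        (AtomicProof.split_helper hmid) (AtomicProof.ov_helper hmid) ?_
      intro s hs
      have h1 := AtomicProof.abs_le_of_uIcc' hs
      linarith
    · have hmidts : ts ∈ uIcc t₁ tb := AtomicProof.mid_helper hmono hmid
      refine AtomicProof.ext_lemma hΩ hbΩ hbdist hσ hcont hQ hts htb hPstar hr hδ hsep hkey
        (AtomicProof.split_helper Set.left_mem_uIcc) (AtomicProof.ov_helper Set.left_mem_uIcc) ?_
      intro s hs
      have h1 := AtomicProof.abs_le_max_of_uIcc (x := tb) hs
      have h2 : |ts - tb| ≤ |t₁ - tb| := AtomicProof.abs_le_of_uIcc' hmidts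
      have h3 : |tb - tb| = 0 := by simp
      refine lt_of_le_of_lt h1 (max_lt (by linarith) (by rw [h3]; linarith))
  have hall : ∀ t ∈ I, AtomicProof.Pgood I σ b ts t :=
    AtomicProof.clopen_principle (E := {t | AtomicProof.Pgood I σ b ts t})
      hI.isPreconnected hts hPstar hopen hclosed
  have hall2 : ∀ t : ℝ, ∃ f : ℝ → Equiv.Perm (Fin Q), t ∈ I →
      (f ts = 1 ∧ (∀ s ∈ I ∩ Set.uIcc ts t, ∀ p, σ (f s p) s = σ p ts) ∧
       ∀ p, ContinuousOn (fun s => b (f s p) s) (I ∩ Set.uIcc ts t)) := by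
    intro t
    by_cases ht : t ∈ I
    · obtain ⟨f, h1, h2, h3⟩ := hall t ht
      exact ⟨f, fun _ => ⟨h1, h2, h3⟩⟩
    · exact ⟨fun _ => 1, fun h => absurd h ht⟩
  choose F hF using hall2
  have hπeq : ∀ t₃, t₃ ∈ I → ∀ s, s ∈ I ∩ Set.uIcc ts t₃ →
      (if h : s ∈ I then F s s else 1) = F t₃ s := by
    intro t₃ ht₃ s hs
    rw [dif_pos hs.1]
    have hsub : Set.uIcc ts s ⊆ Set.uIcc ts t₃ :=
      Set.uIcc_subset_uIcc Set.left_mem_uIcc hs.2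
    have hu := AtomicProof.unique_labeling hI hQ hbdist hts (F s) (F t₃)
      (by rw [(hF s hs.1).1, (hF t₃ ht₃).1])
      ((hF s hs.1).2.2)
      (fun p => ((hF t₃ ht₃).2.2 p).mono (Set.inter_subset_inter_right _ hsub))
    exact hu s ⟨hs.1, Set.right_mem_uIcc⟩
  refine ⟨fun t => if h : t ∈ I then F t t else 1, fun p => ⟨?_, σ p ts, ?_⟩⟩
  · -- continuity
    intro t₀ ht₀
    have hpiece : ∀ S : Set ℝ, (∃ t₃ ∈ I, t₀ ∈ Set.uIcc ts t₃ ∧ ∃ η > 0,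
        ∀ s ∈ I ∩ S, |s - t₀| < η → s ∈ Set.uIcc ts t₃) →
        ContinuousWithinAt (fun t => b ((if h : t ∈ I then F t t else 1) p) t) (I ∩ S) t₀ := by
      rintro S ⟨t₃, ht₃, ht₀m, η, hη, hcov⟩
      have hmem : I ∩ Set.uIcc ts t₃ ∈ nhdsWithin t₀ (I ∩ S) :=
        Metric.mem_nhdsWithin_iff.mpr ⟨η, hη, fun s hs =>
          ⟨hs.2.1, hcov s hs.2 (by rw [← Real.dist_eq]; exact Metric.mem_ball.mp hs.1)⟩⟩
      have base := ((hF t₃ ht₃).2.2 p) t₀ ⟨ht₀, ht₀m⟩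
      have base' := base.mono_of_mem_nhdsWithin hmem
      refine base'.congr_of_eventuallyEq ?_ ?_
      · filter_upwards [hmem] with s hs
        rw [hπeq t₃ ht₃ s hs]
      · rw [hπeq t₃ ht₃ t₀ ⟨ht₀, ht₀m⟩]
    have hpiece0 : ∀ S : Set ℝ, (∃ η > 0, ∀ s ∈ I ∩ S, |s - t₀| < η → s = t₀) →
        ContinuousWithinAt (fun t => b ((if h : t ∈ I then F t t else 1) p) t) (I ∩ S) t₀ :=
      fun S h => AtomicProof.cwa_of_near_eq h
    have hdec : I ⊆ (I ∩ {s | s ≤ t₀ ∧ s ≤ ts}) ∪ ((I ∩ {s | s ≤ t₀ ∧ ts ≤ s}) ∪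
        ((I ∩ {s | t₀ ≤ s ∧ s ≤ ts}) ∪ (I ∩ {s | t₀ ≤ s ∧ ts ≤ s}))) := by
      intro s hs
      rcases le_total s t₀ with h1 | h1 <;> rcases le_total s ts with h2 | h2
      · exact Or.inl ⟨hs, h1, h2⟩
      · exact Or.inr (Or.inl ⟨hs, h1, h2⟩)
      · exact Or.inr (Or.inr (Or.inl ⟨hs, h1, h2⟩))
      · exact Or.inr (Or.inr (Or.inr ⟨hs, h1, h2⟩))
    refine ContinuousWithinAt.mono (ContinuousWithinAt.union ?_ (ContinuousWithinAt.union ?_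
      (ContinuousWithinAt.union ?_ ?_))) hdec
    · -- s ≤ t₀, s ≤ ts
      rcases lt_or_ge ts t₀ with hc | hc
      · refine hpiece0 _ ⟨t₀ - ts, by linarith, fun s hs hd => ?_⟩
        exfalso
        rcases abs_lt.mp hd with ⟨hd1, hd2⟩
        have := hs.2.2
        linarith
      · by_cases hex : ∃ tm ∈ I, tm < t₀
        · obtain ⟨tm, htm, htmlt⟩ := hex
          refine hpiece _ ⟨tm, htm, ?_, t₀ - tm, by linarith, ?_⟩
          · exact Set.mem_uIcc.mpr (Or.inr ⟨htmlt.le, hc⟩)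
          · intro s hs hd
            rcases abs_lt.mp hd with ⟨hd1, hd2⟩
            exact Set.mem_uIcc.mpr (Or.inr ⟨by linarith, hs.2.2⟩)
        · push_neg at hex
          exact hpiece0 _ ⟨1, one_pos, fun s hs _ => le_antisymm hs.2.1 (hex s hs.1)⟩
    · -- s ≤ t₀, ts ≤ s
      exact hpiece _ ⟨t₀, ht₀, Set.right_mem_uIcc, 1, one_pos, fun s hs _ =>
        Set.mem_uIcc.mpr (Or.inl ⟨hs.2.2, hs.2.1⟩)⟩
    · -- t₀ ≤ s, s ≤ ts
      exact hpiece _ ⟨t₀, ht₀, Set.right_mem_uIcc, 1, one_pos, fun s hs _ =>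
        Set.mem_uIcc.mpr (Or.inr ⟨hs.2.1, hs.2.2⟩)⟩
    · -- t₀ ≤ s, ts ≤ s
      rcases lt_or_ge t₀ ts with hc | hc
      · refine hpiece0 _ ⟨ts - t₀, by linarith, fun s hs hd => ?_⟩
        exfalso
        rcases abs_lt.mp hd with ⟨hd1, hd2⟩
        have := hs.2.2
        linarith
      · by_cases hex : ∃ tp ∈ I, t₀ < tp
        · obtain ⟨tp, htp, htplt⟩ := hex
          refine hpiece _ ⟨tp, htp, ?_, tp - t₀, by linarith, ?_⟩
          · exact Set.mem_uIcc.mpr (Or.inl ⟨hc, htplt.le⟩)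
          · intro s hs hd
            rcases abs_lt.mp hd with ⟨hd1, hd2⟩
            exact Set.mem_uIcc.mpr (Or.inl ⟨hs.2.2, by linarith⟩)
        · push_neg at hex
          exact hpiece0 _ ⟨1, one_pos, fun s hs _ => le_antisymm (hex s hs.1) hs.2.1⟩
  · -- constancy
    intro t ht
    simp only [dif_pos ht]
    exact (hF t ht).2.1 t ⟨ht, Set.right_mem_uIcc⟩ p
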